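/- (Proposition 3) Let N_A, N_B ≥ 2 and let ρ^A : Matrix (Fin N_A) (Fin N_A) ℂ and ρ^B : Matrix (Fin N_B) (Fin N_B) ℂ be density matrices, and set ρ = ρ^A ⊗ₖ ρ^B (a simply separable state). Then ‖RM(ρ)‖_tr ≤ 1, and equality ‖RM(ρ)‖_tr = 1 holds if and only if ρ is a pure state, i.e. ρ·ρ = ρ (equivalently, ρ^A·ρ^A = ρ^A and ρ^B·ρ^B = ρ^B). -/

import Mathlib

open Matrix Kronecker Complex ComplexOrder

noncomputable def traceNorm {m n : Type*} [Fintype m] [Fintype n] [DecidableEq n]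
    (M : Matrix m n ℂ) : ℝ :=
  (((Matrix.posSemidef_conjTranspose_mul_self M).isHermitian.eigenvectorUnitary : Matrix n n ℂ) *
      diagonal (((↑) : ℝ → ℂ) ∘ (√·) ∘ (Matrix.posSemidef_conjTranspose_mul_self M).isHermitian.eigenvalues) *
      (star ((Matrix.posSemidef_conjTranspose_mul_self M).isHermitian.eigenvectorUnitary :
        Matrix n n ℂ))).trace.re

def realign {NA NB : ℕ} (ρ : Matrix (Fin NA × Fin NB) (Fin NA × Fin NB) ℂ) :
    Matrix (Fin NA × Fin NA) (Fin NB × Fin NB) ℂ :=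
  fun p q => ρ (p.1, q.1) (p.2, q.2)

def IsDensityMatrix {n : Type*} [Fintype n] (ρ : Matrix n n ℂ) : Prop :=
  ρ.PosSemidef ∧ ρ.trace = 1

noncomputable def hsNorm {m n : Type*} [Fintype m] [Fintype n] (M : Matrix m n ℂ) : ℝ :=
  Real.sqrt (∑ i, ∑ j, ‖M i j‖ ^ 2)

noncomputable def hsInner {m n : Type*} [Fintype m] [Fintype n] (X Y : Matrix m n ℂ) : ℂ :=
  (Xᴴ * Y).trace

noncomputable def marginalA {NA NB : ℕ} (ρ : Matrix (Fin NA × Fin NB) (Fin NA × Fin NB) ℂ) :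
    Matrix (Fin NA) (Fin NA) ℂ :=
  fun m n => ∑ μ, ρ (m, μ) (n, μ)

noncomputable def marginalB {NA NB : ℕ} (ρ : Matrix (Fin NA × Fin NB) (Fin NA × Fin NB) ℂ) :
    Matrix (Fin NB) (Fin NB) ℂ :=
  fun μ ν => ∑ m, ρ (m, μ) (m, ν)

def SeparableState {NA NB : ℕ} (ρ : Matrix (Fin NA × Fin NB) (Fin NA × Fin NB) ℂ) : Prop :=
  ∃ (ι : Type) (s : Finset ι) (p : ι → ℝ)
    (ρA : ι → Matrix (Fin NA) (Fin NA) ℂ) (ρB : ι → Matrix (Fin NB) (Fin NB) ℂ),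
    (∀ i ∈ s, 0 < p i) ∧ (∑ i ∈ s, p i = 1) ∧
    (∀ i ∈ s, IsDensityMatrix (ρA i)) ∧ (∀ i ∈ s, IsDensityMatrix (ρB i)) ∧
    ρ = ∑ i ∈ s, (p i : ℂ) • (ρA i ⊗ₖ ρB i)

noncomputable def l2OpNorm {n : Type*} [Fintype n] [DecidableEq n] (M : Matrix n n ℂ) : ℝ :=
  ‖Matrix.toEuclideanCLM (𝕜 := ℂ) (n := n) M‖

lemma psd_smul {n : Type*} [Fintype n] {N : Matrix n n ℂ} (hN : N.PosSemidef)
    {t : ℝ} (ht : 0 ≤ t) : ((t : ℂ) • N).PosSemidef := by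
  constructor
  · unfold Matrix.IsHermitian
    rw [conjTranspose_smul, hN.1.eq]
    congr 1
    simp
  · intro x
    exact (hN.smul (Complex.zero_le_real.mpr ht)).2 x

lemma trace_sq_eq {n : Type*} [Fintype n] {ρ : Matrix n n ℂ} (hH : ρ.IsHermitian) :
    (ρ * ρ).trace = ((∑ i, ∑ j, ‖ρ i j‖^2 : ℝ) : ℂ) := by
  rw [Matrix.trace]
  push_cast
  simp only [Matrix.diag_apply, Matrix.mul_apply]
  refine Finset.sum_congr rfl fun i _ => Finset.sum_congr rfl fun j _ => ?_
  rw [← hH.apply j i]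
  exact_mod_cast Complex.mul_conj' _

lemma density_trace_sq {n : Type*} [Fintype n] [DecidableEq n] {ρ : Matrix n n ℂ}
    (h : ρ.PosSemidef) (ht : ρ.trace = 1) :
    (ρ * ρ).trace.re ≤ 1 ∧ ((ρ * ρ).trace.re = 1 ↔ ρ * ρ = ρ) := by
  have hH := h.1
  set U : Matrix n n ℂ := (hH.eigenvectorUnitary : Matrix n n ℂ) with hUdef
  set D : Matrix n n ℂ := Matrix.diagonal (Complex.ofReal ∘ hH.eigenvalues) with hDdef
  have hU : star U * U = 1 := Matrix.mem_unitaryGroup_iff'.mp hH.eigenvectorUnitary.2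
  have key : ∀ X : Matrix n n ℂ, star U * (U * X) = X := fun X => by
    rw [← mul_assoc, hU, one_mul]
  have hspec : ρ = U * D * star U := hH.spectral_theorem
  have htr : (∑ i, (hH.eigenvalues i : ℂ)) = 1 := by
    have : D.trace = 1 := by
      rw [← ht, hspec, Matrix.trace_mul_cycle, hU, one_mul]
    simpa [hDdef, Matrix.trace_diagonal] using this
  have hsum : (∑ i, hH.eigenvalues i) = 1 := by
    have := congrArg Complex.re htr
    simpa using this
  have hsq : ρ * ρ = U * (D * D) * star U := by
    rw [hspec]
    simp only [mul_assoc]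
    rw [key (D * star U)]
  have htr2 : (ρ * ρ).trace = ∑ i, ((hH.eigenvalues i : ℂ))^2 := by
    rw [hsq, Matrix.trace_mul_cycle, hU, one_mul]
    simp [hDdef, Matrix.diagonal_mul_diagonal, Matrix.trace_diagonal, sq]
  have hre : (ρ * ρ).trace.re = ∑ i, (hH.eigenvalues i)^2 := by
    rw [htr2]
    simp [← Complex.ofReal_pow]
  have hev : ∀ i, 0 ≤ hH.eigenvalues i := fun i => h.eigenvalues_nonneg i
  have hle1 : ∀ i, hH.eigenvalues i ≤ 1 := by
    intro i
    rw [← hsum]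
    exact Finset.single_le_sum (fun j _ => hev j) (Finset.mem_univ i)
  have hsqle : ∀ i, (hH.eigenvalues i)^2 ≤ hH.eigenvalues i := by
    intro i; nlinarith [hev i, hle1 i]
  constructor
  · rw [hre, ← hsum]
    exact Finset.sum_le_sum fun i _ => hsqle i
  · constructor
    · intro h1
      have heq : ∀ i ∈ Finset.univ, (hH.eigenvalues i)^2 = hH.eigenvalues i := by
        rw [← Finset.sum_eq_sum_iff_of_le (fun i _ => hsqle i)]
        rw [← hre, h1, hsum]
      have hDD : D * D = D := by
        rw [hDdef, Matrix.diagonal_mul_diagonal]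
        refine congrArg Matrix.diagonal (funext fun i => ?_)
        have h3 : hH.eigenvalues i * hH.eigenvalues i = hH.eigenvalues i := by
          have := heq i (Finset.mem_univ i); nlinarith [this]
        simp only [Pi.mul_apply, Function.comp_apply]
        rw [← Complex.ofReal_mul, h3]
      rw [hsq, hDD, ← hspec]
    · intro h2
      rw [h2, ht]
      simp

lemma traceNorm_rank_one {m n : Type*} [Fintype m] [Fintype n] [DecidableEq n]
    (a : m → ℂ) (b : n → ℂ) (hd : 0 < ∑ j, ‖b j‖^2) :
    traceNorm (Matrix.vecMulVec a b) =
      Real.sqrt (∑ i, ‖a i‖^2) * Real.sqrt (∑ j, ‖b j‖^2) := by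
  set c : ℝ := ∑ i, ‖a i‖^2 with hc
  set d : ℝ := ∑ j, ‖b j‖^2 with hdj
  have hc0 : 0 ≤ c := Finset.sum_nonneg fun i _ => sq_nonneg _
  set M : Matrix m n ℂ := Matrix.vecMulVec a b with hM
  set N : Matrix n n ℂ := Matrix.vecMulVec (star b) b with hN
  have hNpsd : N.PosSemidef := by
    have : N = (Matrix.replicateRow Unit b)ᴴ * Matrix.replicateRow Unit b := by
      ext q q'
      simp [hN, Matrix.mul_apply, Matrix.vecMulVec_apply]
    rw [this]
    exact Matrix.posSemidef_conjTranspose_mul_self _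
  have hMM : Mᴴ * M = (c : ℂ) • N := by
    ext q q'
    simp only [hM, hN, Matrix.mul_apply, Matrix.conjTranspose_apply,
      Matrix.vecMulVec_apply, Matrix.smul_apply, Pi.star_apply, smul_eq_mul]
    have : ∀ p, star (a p * b q) * (a p * b q') =
        ((‖a p‖^2 : ℝ) : ℂ) * (star (b q) * b q') := by
      intro p
      have h1 : a p * (starRingEnd ℂ) (a p) = ((‖a p‖ : ℂ))^2 := by
        have := Complex.mul_conj' (a p); push_cast at this; exact this
      simp only [star_mul', RCLike.star_def]
      push_cast
      linear_combination ((starRingEnd ℂ) (b q) * b q') * h1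
    rw [Finset.sum_congr rfl fun p _ => this p, ← Finset.sum_mul, hc]
    push_cast
    ring
  have hNN : N * N = (d : ℂ) • N := by
    ext q q'
    simp only [hN, Matrix.mul_apply, Matrix.vecMulVec_apply, Matrix.smul_apply,
      Pi.star_apply, smul_eq_mul]
    have : ∀ k, star (b q) * b k * (star (b k) * b q') =
        ((‖b k‖^2 : ℝ) : ℂ) * (star (b q) * b q') := by
      intro k
      have h1 : b k * (starRingEnd ℂ) (b k) = ((‖b k‖ : ℂ))^2 := by
        have := Complex.mul_conj' (b k); push_cast at this; exact this
      simp only [RCLike.star_def]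
      push_cast
      linear_combination ((starRingEnd ℂ) (b q) * b q') * h1
    rw [Finset.sum_congr rfl fun k _ => this k, ← Finset.sum_mul, hdj]
    push_cast
    ring
  set t : ℝ := Real.sqrt c / Real.sqrt d with htt
  have ht0 : 0 ≤ t := div_nonneg (Real.sqrt_nonneg _) (Real.sqrt_nonneg _)
  set S : Matrix n n ℂ := (t : ℂ) • N with hS
  have hSpsd : S.PosSemidef := psd_smul hNpsd ht0
  have httd : t * t * d = c := by
    rw [htt, div_mul_div_comm, Real.mul_self_sqrt hc0, Real.mul_self_sqrt hd.le,
      div_mul_cancel₀]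
    exact ne_of_gt hd
  have hS2 : S ^ 2 = Mᴴ * M := by
    rw [hS, pow_two, smul_mul_smul_comm, hNN, smul_smul, hMM]
    congr 1
    push_cast [← httd]
    ring
  have hSsqrt : S =
      ((Matrix.posSemidef_conjTranspose_mul_self M).isHermitian.eigenvectorUnitary : Matrix n n ℂ) *
      diagonal (((↑) : ℝ → ℂ) ∘ (√·) ∘ (Matrix.posSemidef_conjTranspose_mul_self M).isHermitian.eigenvalues) *
      (star ((Matrix.posSemidef_conjTranspose_mul_self M).isHermitian.eigenvectorUnitary :
        Matrix n n ℂ)) := by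
    have hH := (Matrix.posSemidef_conjTranspose_mul_self M).isHermitian
    have e : ((Matrix.posSemidef_conjTranspose_mul_self M).isHermitian.eigenvectorUnitary : Matrix n n ℂ) *
      diagonal (((↑) : ℝ → ℂ) ∘ (√·) ∘ (Matrix.posSemidef_conjTranspose_mul_self M).isHermitian.eigenvalues) *
      (star ((Matrix.posSemidef_conjTranspose_mul_self M).isHermitian.eigenvectorUnitary :
        Matrix n n ℂ)) = cfc Real.sqrt (Mᴴ * M) := by
      rw [hH.cfc_eq, IsHermitian.cfc, Unitary.conjStarAlgAut_apply]
      rfl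
    rw [e, ← hS2]
    have hspec : ∀ x ∈ spectrum ℝ S, 0 ≤ x := by
      intro x hx
      obtain ⟨i, rfl⟩ := hSpsd.1.spectrum_real_eq_range_eigenvalues ▸ hx
      exact hSpsd.eigenvalues_nonneg i
    have hSa : IsSelfAdjoint S := hSpsd.1
    calc S = cfc (fun x : ℝ => x) S := (cfc_id' ℝ S).symm
      _ = cfc (fun x : ℝ => Real.sqrt (x ^ 2)) S :=
          cfc_congr fun x hx => (Real.sqrt_sq (hspec x hx)).symm
      _ = cfc Real.sqrt (cfc (fun x : ℝ => x ^ 2) S) := cfc_comp Real.sqrt (fun x => x ^ 2) S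
      _ = cfc Real.sqrt (S ^ 2) := by rw [cfc_pow_id S 2]
  have htrN : N.trace = (d : ℂ) := by
    rw [Matrix.trace, hdj]
    push_cast
    refine Finset.sum_congr rfl fun q _ => ?_
    simp only [Matrix.diag_apply, hN, Matrix.vecMulVec_apply, Pi.star_apply]
    have := Complex.mul_conj' (b q)
    push_cast at this
    rw [mul_comm] at this
    exact this
  have : traceNorm M = t * d := by
    rw [traceNorm, ← hSsqrt, hS, Matrix.trace_smul, htrN, smul_eq_mul]
    simp
  have hsd : Real.sqrt d ≠ 0 := ne_of_gt (Real.sqrt_pos.mpr hd)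
  rw [this, htt, div_mul_eq_mul_div, div_eq_iff hsd, mul_assoc, Real.mul_self_sqrt hd.le]


set_option maxHeartbeats 1000000 in
theorem traceNorm_realign_simply_separable
    (NA NB : ℕ) (hNA : 2 ≤ NA) (hNB : 2 ≤ NB)
    (ρA : Matrix (Fin NA) (Fin NA) ℂ) (ρB : Matrix (Fin NB) (Fin NB) ℂ)
    (hρA : IsDensityMatrix ρA) (hρB : IsDensityMatrix ρB) :
    traceNorm (realign (ρA ⊗ₖ ρB)) ≤ 1 ∧
      (traceNorm (realign (ρA ⊗ₖ ρB)) = 1 ↔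
        (ρA ⊗ₖ ρB) * (ρA ⊗ₖ ρB) = ρA ⊗ₖ ρB) := by
  obtain ⟨hApsd, hAtr⟩ := hρA
  obtain ⟨hBpsd, hBtr⟩ := hρB
  set x : ℝ := ∑ i, ∑ j, ‖ρA i j‖^2 with hxdef
  set y : ℝ := ∑ i, ∑ j, ‖ρB i j‖^2 with hydef
  have hxA : (ρA * ρA).trace = ((x : ℝ) : ℂ) := trace_sq_eq hApsd.1
  have hyB : (ρB * ρB).trace = ((y : ℝ) : ℂ) := trace_sq_eq hBpsd.1
  have hxre : (ρA * ρA).trace.re = x := by rw [hxA]; simp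
  have hyre : (ρB * ρB).trace.re = y := by rw [hyB]; simp
  have hdx := density_trace_sq hApsd hAtr
  have hdy := density_trace_sq hBpsd hBtr
  rw [hxre] at hdx
  rw [hyre] at hdy
  obtain ⟨hx_le, hx_iff⟩ := hdx
  obtain ⟨hy_le, hy_iff⟩ := hdy
  have hx0 : 0 ≤ x := Finset.sum_nonneg fun i _ => Finset.sum_nonneg fun j _ => sq_nonneg _
  have hy0 : 0 ≤ y := Finset.sum_nonneg fun i _ => Finset.sum_nonneg fun j _ => sq_nonneg _
  have hy_pos : 0 < y := by
    rcases hy0.lt_or_eq with h | h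
    · exact h
    · exfalso
      have h0 : y = 0 := h.symm
      have hsum0 : (∑ i, ∑ j, ‖ρB i j‖^2) = 0 := by rw [← hydef]; exact h0
      have hz : ρB = 0 := by
        ext i j
        have h1 : ∀ i ∈ (Finset.univ : Finset (Fin NB)), (∑ j, ‖ρB i j‖^2) = 0 :=
          (Finset.sum_eq_zero_iff_of_nonneg
            (fun i _ => Finset.sum_nonneg fun j _ => sq_nonneg _)).mp hsum0
        have h2 := (Finset.sum_eq_zero_iff_of_nonneg
          (fun j _ => sq_nonneg (‖ρB i j‖))).mp (h1 i (Finset.mem_univ i)) j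
          (Finset.mem_univ j)
        have : ‖ρB i j‖ = 0 := by nlinarith [norm_nonneg (ρB i j)]
        simpa using this
      rw [hz, Matrix.trace_zero] at hBtr
      exact one_ne_zero hBtr.symm
  have hMeq : realign (ρA ⊗ₖ ρB) =
      Matrix.vecMulVec (fun p : Fin NA × Fin NA => ρA p.1 p.2)
        (fun q : Fin NB × Fin NB => ρB q.1 q.2) := by
    ext p q
    simp [realign, Matrix.vecMulVec_apply, Matrix.kroneckerMap_apply]
  have hca : (∑ p : Fin NA × Fin NA, ‖ρA p.1 p.2‖^2) = x := by
    rw [hxdef, Fintype.sum_prod_type]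
  have hcb : (∑ q : Fin NB × Fin NB, ‖ρB q.1 q.2‖^2) = y := by
    rw [hydef, Fintype.sum_prod_type]
  have htn : traceNorm (realign (ρA ⊗ₖ ρB)) = Real.sqrt x * Real.sqrt y := by
    rw [hMeq, traceNorm_rank_one _ _ (by rw [hcb]; exact hy_pos), hca, hcb]
  have hsx1 : Real.sqrt x ≤ 1 := Real.sqrt_le_one.mpr hx_le
  have hsy1 : Real.sqrt y ≤ 1 := Real.sqrt_le_one.mpr hy_le
  have hkr : (ρA ⊗ₖ ρB) * (ρA ⊗ₖ ρB) = (ρA * ρA) ⊗ₖ (ρB * ρB) :=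
    (Matrix.mul_kronecker_mul _ _ _ _).symm
  constructor
  · rw [htn]
    calc Real.sqrt x * Real.sqrt y ≤ 1 * 1 :=
          mul_le_mul hsx1 hsy1 (Real.sqrt_nonneg y) zero_le_one
      _ = 1 := one_mul 1
  · constructor
    · intro h1
      rw [htn] at h1
      have hxy : x * y = 1 := by
        have h3 := congrArg (· ^ 2) h1
        simpa [mul_pow, Real.sq_sqrt hx0, Real.sq_sqrt hy0] using h3
      have hx1 : x = 1 := by nlinarith [hxy, hx_le, hy_le, hx0, hy0]
      have hy1 : y = 1 := by nlinarith [hxy, hx_le, hy_le, hx0, hy0]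
      rw [hkr, hx_iff.mp hx1, hy_iff.mp hy1]
    · intro h2
      have htrk : (((x : ℝ) : ℂ)) * (((y : ℝ) : ℂ)) = 1 := by
        rw [← hxA, ← hyB, ← Matrix.trace_kronecker, ← hkr, h2, Matrix.trace_kronecker,
          hAtr, hBtr, mul_one]
      have hxy : x * y = 1 := by
        refine Complex.ofReal_injective ?_
        push_cast
        exact htrk
      have hx1 : x = 1 := by nlinarith [hxy, hx_le, hy_le, hx0, hy0]
      have hy1 : y = 1 := by nlinarith [hxy, hx_le, hy_le, hx0, hy0]
      rw [htn, hx1, hy1, Real.sqrt_one, mul_one]
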